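/- Let α be a type, let F = FreeGroup (Option α), let t = FreeGroup.of none, and let A be the image of FreeGroup α in F under FreeGroup.map some (so F is the internal free product of A and the infinite cyclic subgroup generated by t). Let Φ be an automorphism of F with Φ(t) = t and Φ(A) = A, and suppose the restriction Φ|_A is atoroidal. Then for every nontrivial h ∈ F, if Φ^n(h) is conjugate to h in F for some integer n ≥ 1, then h is conjugate in F to a nonzero power of t. -/

import Mathlib

set_option linter.unusedSectionVars false
namespace Stmt11
open FreeGroup List

variable {β : Type*} [DecidableEq β]

def IL (a : β × Bool) : β × Bool := (a.1, !a.2)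

def NC (a b : β × Bool) : Prop := ¬(a.1 = b.1 ∧ a.2 = !b.2)

lemma IL_inj {a b : β × Bool} (h : IL a = IL b) : a = b := by
  obtain ⟨a1,a2⟩ := a; obtain ⟨b1,b2⟩ := b
  simp only [IL, Prod.mk.injEq] at h
  exact Prod.ext h.1 (by cases a2 <;> cases b2 <;> simp_all)

@[simp] lemma IL_IL (a : β × Bool) : IL (IL a) = a := by simp [IL]

lemma NC_iff {a b : β × Bool} : NC a b ↔ b ≠ IL a := by
  obtain ⟨a1, a2⟩ := a; obtain ⟨b1, b2⟩ := b
  simp only [NC, IL, ne_eq, Prod.mk.injEq, not_and]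
  cases a2 <;> cases b2 <;> simp [eq_comm]

lemma NC_iff' {a b : β × Bool} : NC a b ↔ a ≠ IL b := by
  rw [NC_iff]
  constructor
  · rintro h rfl; exact h (by simp)
  · rintro h rfl; exact h (by simp)

def Reduced (L : List (β × Bool)) : Prop := L.Chain' NC

def CyclicallyReduced (L : List (β × Bool)) : Prop := Reduced (L ++ L)

lemma Reduced.infix {L L' : List (β × Bool)} (h : Reduced L) (h' : L' <:+: L) :
    Reduced L' := List.IsChain.infix h h'

lemma CyclicallyReduced.reduced {L : List (β × Bool)} (h : CyclicallyReduced L) :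
    Reduced L := h.infix ⟨[], L, by simp⟩

lemma reduced_nil : Reduced ([] : List (β × Bool)) := List.isChain_nil

lemma reduce_eq_self {L : List (β × Bool)} (h : Reduced L) : reduce L = L := by
  induction L with
  | nil => rfl
  | cons x L ih =>
    have hL : Reduced L := h.tail
    rw [reduce.cons, ih hL]
    cases L with
    | nil => rfl
    | cons y t =>
      have : NC x y := (List.isChain_cons_cons.1 h).1
      simp only [NC] at this
      simp [if_neg this]

lemma reduced_reduce (L : List (β × Bool)) : Reduced (reduce L) := by
  induction L with
  | nil => exact reduced_nil
  | cons x L ih =>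
    rw [reduce.cons]
    cases hL : reduce L with
    | nil => exact List.isChain_singleton _
    | cons y t =>
      rw [hL] at ih
      show Reduced (if x.1 = y.1 ∧ x.2 = !y.2 then t else x :: y :: t)
      by_cases hc : x.1 = y.1 ∧ x.2 = !y.2
      · rw [if_pos hc]; exact ih.tail
      · rw [if_neg hc]; exact List.isChain_cons_cons.2 ⟨hc, ih⟩

lemma toWord_mk_reduced {L : List (β × Bool)} (h : Reduced L) : (mk L).toWord = L := by
  rw [toWord_mk, reduce_eq_self h]

lemma reduced_toWord (x : FreeGroup β) : Reduced x.toWord := by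
  rw [← reduce_toWord]; exact reduced_reduce _

lemma eq_of_mk_eq {L₁ L₂ : List (β × Bool)} (h₁ : Reduced L₁) (h₂ : Reduced L₂)
    (h : mk L₁ = mk L₂) : L₁ = L₂ := by
  rw [← toWord_mk_reduced h₁, ← toWord_mk_reduced h₂, h]

lemma mk_ne_one {L : List (β × Bool)} (h : Reduced L) (hne : L ≠ []) : mk L ≠ 1 :=
  fun hcon => hne (by rw [← toWord_mk_reduced h, hcon, toWord_one])

lemma chain'_triple {L : List (β × Bool)} (h : CyclicallyReduced L) :
    Reduced (L ++ L ++ L) := by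
  rcases List.isChain_append.1 h with ⟨h1, h2, h3⟩
  refine List.isChain_append.2 ⟨List.isChain_append.2 ⟨h1, h1, h3⟩, h1, ?_⟩
  intro x hx y hy
  exact h3 x (by simpa using hx) y hy

lemma CyclicallyReduced.append_comm {a b : List (β × Bool)}
    (h : CyclicallyReduced (a ++ b)) : CyclicallyReduced (b ++ a) := by
  have : (b ++ a) ++ (b ++ a) <:+: (a ++ b) ++ (a ++ b) ++ (a ++ b) :=
    ⟨a, b, by simp⟩
  exact (chain'_triple h).infix this

lemma CyclicallyReduced.of_isRotated {L L' : List (β × Bool)}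
    (h : CyclicallyReduced L) (hr : L ~r L') : CyclicallyReduced L' := by
  obtain ⟨n, rfl⟩ := hr
  rw [List.rotate_eq_drop_append_take_mod]
  have hL : L = L.take (n % L.length) ++ L.drop (n % L.length) := (List.take_append_drop _ _).symm
  exact CyclicallyReduced.append_comm (by rwa [← hL])

lemma CyclicallyReduced.wrap {L : List (β × Bool)} (h : CyclicallyReduced L)
    {x y : β × Bool} (hx : L.getLast? = some x) (hy : L.head? = some y) : NC x y := by
  rcases List.isChain_append.1 h with ⟨-, -, h3⟩
  exact h3 x hx y hy

/- ### invRev facts -/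

lemma invRev_cons (x : β × Bool) (L : List (β × Bool)) :
    invRev (x :: L) = invRev L ++ [IL x] := by
  simp [invRev, IL]

lemma mk_singleton_inv (l : β × Bool) : (mk [l])⁻¹ = mk [IL l] := by
  rw [inv_mk]
  simp [invRev, IL]

lemma getLast?_invRev (L : List (β × Bool)) :
    (invRev L).getLast? = L.head?.map IL := by
  cases L with
  | nil => simp [invRev]
  | cons x t => rw [invRev_cons, List.getLast?_append_of_ne_nil _ (by simp)]; simp

lemma reduced_invRev {L : List (β × Bool)} (h : Reduced L) : Reduced (invRev L) := by
  unfold invRev Reduced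
  change List.IsChain _ _
  rw [List.isChain_reverse, List.isChain_map]
  refine h.imp fun {a b} hab => ?_
  intro ⟨h1, h2⟩
  exact hab ⟨h1.symm, by simp at h2 ⊢; rw [h2]; simp⟩

/- ### configurations -/

def Conf (z ρ : List (β × Bool)) : Prop :=
  ρ ≠ [] ∧ CyclicallyReduced ρ ∧ Reduced (z ++ ρ ++ invRev z)

lemma mk_conf (z ρ : List (β × Bool)) :
    mk (z ++ ρ ++ invRev z) = mk z * mk ρ * (mk z)⁻¹ := by
  rw [inv_mk, mul_mk, mul_mk]

lemma step (l : β × Bool) {z ρ : List (β × Bool)} (h : Conf z ρ) :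
    ∃ z' ρ', Conf z' ρ' ∧ ρ' ~r ρ ∧
      mk [l] * mk (z ++ ρ ++ invRev z) * (mk [l])⁻¹ = mk (z' ++ ρ' ++ invRev z') := by
  obtain ⟨hρne, hρ, hred⟩ := h
  cases z with
  | cons w z₂ =>
    by_cases hw : w = IL l
    · -- cancellation with head of z
      refine ⟨z₂, ρ, ⟨hρne, hρ, ?_⟩, IsRotated.refl _, ?_⟩
      · refine hred.infix ⟨[w], [IL w], ?_⟩
        simp [invRev_cons]
      · subst hw
        rw [mk_conf, mk_conf]
        have h1 : mk (IL l :: z₂) = (mk [l])⁻¹ * mk z₂ := by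
          rw [mk_singleton_inv, mul_mk]; rfl
        rw [h1]
        group
    · -- no cancellation: push letter
      refine ⟨l :: w :: z₂, ρ, ⟨hρne, hρ, ?_⟩, IsRotated.refl _, ?_⟩
      · have : (l :: w :: z₂) ++ ρ ++ invRev (l :: w :: z₂)
            = l :: (((w :: z₂) ++ ρ ++ invRev (w :: z₂)) ++ [IL l]) := by
          rw [invRev_cons]; simp
        rw [this]
        refine List.isChain_cons.2 ⟨?_, ?_⟩
        · intro y hy
          simp only [List.cons_append, List.append_assoc, List.head?_cons,
            Option.mem_def, Option.some.injEq] at hy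
          rw [NC_iff]
          rintro rfl
          exact hw hy
        · rw [List.isChain_append]
          refine ⟨hred, List.isChain_singleton _, ?_⟩
          intro x hx y hy
          obtain rfl : IL l = y := by simpa using hy
          rw [List.getLast?_append_of_ne_nil _ (by rw [invRev_cons]; simp)] at hx
          rw [getLast?_invRev] at hx
          simp only [List.head?_cons, Option.map_some] at hx
          obtain rfl : IL w = x := by simpa using hx
          rw [NC_iff]
          intro hcon
          rw [IL_IL] at hcon
          exact hw hcon.symm
      · rw [mk_conf, mk_conf]
        have h1 : mk (l :: w :: z₂) = mk [l] * mk (w :: z₂) := by rw [mul_mk]; rfl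
        rw [h1]
        group
  | nil =>
    simp only [invRev_empty, List.append_nil, List.nil_append] at hred ⊢
    obtain ⟨b, T, rfl⟩ : ∃ b T, ρ = b :: T := by
      cases ρ with
      | nil => exact absurd rfl hρne
      | cons b T => exact ⟨b, T, rfl⟩
    by_cases hb : b = IL l
    · -- rotate head to back
      subst hb
      refine ⟨[], T ++ [IL l], ?_, ?_, ?_⟩
      · refine ⟨by simp, hρ.of_isRotated (List.isRotated_append (l := [IL l])), ?_⟩
        simp only [invRev_empty, List.append_nil, List.nil_append]
        exact (hρ.of_isRotated (List.isRotated_append (l := [IL l]))).reduced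
      · exact (List.isRotated_append (l := [IL l]) (l' := T)).symm
      · have h1 : mk (IL l :: T) = (mk [l])⁻¹ * mk T := by
          rw [mk_singleton_inv, mul_mk]; rfl
        simp only [invRev_empty, List.append_nil, List.nil_append]
        rw [h1, mk_singleton_inv, ← mul_mk]
        simp only [← mk_singleton_inv]
        group
    · rcases eq_or_ne ((b :: T).getLast (by simp)) l with hlast | hlast
      · -- last letter is l : rotate back to front
        obtain ⟨D, hD⟩ : ∃ D, b :: T = D ++ [l] := by
          refine ⟨(b :: T).dropLast, ?_⟩
          conv_lhs => rw [← List.dropLast_append_getLast (l := b :: T) (by simp), hlast]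
        have hrot : (b :: T) ~r (l :: D) := by
          rw [hD]
          exact List.isRotated_append (l := D) (l' := [l])
        refine ⟨[], l :: D, ?_, hrot.symm, ?_⟩
        · refine ⟨by simp, hρ.of_isRotated hrot, ?_⟩
          simp only [invRev_empty, List.append_nil, List.nil_append]
          exact (hρ.of_isRotated hrot).reduced
        · simp only [invRev_empty, List.append_nil, List.nil_append]
          rw [hD, ← mul_mk, mk_singleton_inv]
          have h2 : mk (l :: D) = mk [l] * mk D := by rw [mul_mk]; rfl
          rw [h2]
          simp only [← mk_singleton_inv]
          group
      · -- grow z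
        refine ⟨[l], b :: T, ⟨by simp, hρ, ?_⟩, IsRotated.refl _, ?_⟩
        · have hrw : [l] ++ (b :: T) ++ invRev [l] = l :: ((b :: T) ++ [IL l]) := by
            simp [invRev, IL]
          rw [hrw]
          refine List.isChain_cons.2 ⟨?_, ?_⟩
          · intro y hy
            simp only [List.cons_append, List.head?_cons, Option.mem_def,
              Option.some.injEq] at hy
            rw [NC_iff]
            rintro rfl
            exact hb hy
          · rw [List.isChain_append]
            refine ⟨hred, List.isChain_singleton _, ?_⟩
            intro x hx y hy
            obtain rfl : IL l = y := by simpa using hy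
            have hx' : x = (b :: T).getLast (by simp) := by
              rw [List.getLast?_eq_getLast (by simp)] at hx
              simpa [eq_comm] using hx
            rw [NC_iff']
            subst hx'
            simpa using hlast
        · rw [mk_conf]

lemma conj_list (u : List (β × Bool)) {z ρ : List (β × Bool)} (h : Conf z ρ) :
    ∃ z' ρ', Conf z' ρ' ∧ ρ' ~r ρ ∧
      mk u * mk (z ++ ρ ++ invRev z) * (mk u)⁻¹ = mk (z' ++ ρ' ++ invRev z') := by
  induction u with
  | nil =>
    refine ⟨z, ρ, h, IsRotated.refl _, ?_⟩
    have : mk ([] : List (β × Bool)) = 1 := rfl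
    rw [this]; group
  | cons l u ih =>
    obtain ⟨z₁, ρ₁, h₁, hr₁, he₁⟩ := ih
    obtain ⟨z₂, ρ₂, h₂, hr₂, he₂⟩ := step l h₁
    refine ⟨z₂, ρ₂, h₂, hr₂.trans hr₁, ?_⟩
    have hc : mk (l :: u) = mk [l] * mk u := by rw [mul_mk]; rfl
    rw [hc, ← he₂, ← he₁]
    group

lemma rotation_of_isConj {ρ V : List (β × Bool)} (hρ : CyclicallyReduced ρ) (hne : ρ ≠ [])
    (hV : CyclicallyReduced V) (h : IsConj (mk ρ) (mk V)) : V ~r ρ := by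
  obtain ⟨c, hc⟩ := isConj_iff.1 h
  have hconf : Conf [] ρ := by
    refine ⟨hne, hρ, ?_⟩
    simpa [invRev_empty] using hρ.reduced
  obtain ⟨z', ρ', ⟨hne', hρ', hred'⟩, hrot, he⟩ := conj_list c.toWord hconf
  have hc' : mk V = mk (z' ++ ρ' ++ invRev z') := by
    rw [← he, mk_toWord]
    simpa [invRev_empty] using hc.symm
  have hVw : V = z' ++ ρ' ++ invRev z' := eq_of_mk_eq hV.reduced hred' hc'
  cases z' with
  | nil =>
    rw [hVw]
    simpa [invRev_empty] using hrot
  | cons y z₂ =>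
    exfalso
    have hlast : V.getLast? = some (IL y) := by
      rw [hVw, List.append_assoc, List.getLast?_append_of_ne_nil _ (by
        rw [invRev_cons]; simp)]
      rw [invRev_cons, List.getLast?_append_of_ne_nil _ (by simp)]
      simp
    have hhead : V.head? = some y := by rw [hVw]; rfl
    have := hV.wrap hlast hhead
    rw [NC_iff] at this
    exact this (by simp)

lemma exists_cyclicReduction :
    ∀ (n : ℕ) (x : FreeGroup β), x.toWord.length ≤ n → x ≠ 1 →
      ∃ ρ : List (β × Bool), ρ ≠ [] ∧ CyclicallyReduced ρ ∧ IsConj x (mk ρ) := by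
  intro n
  induction n with
  | zero =>
    intro x hlen hx
    exact absurd (toWord_eq_nil_iff.1 (List.length_eq_zero_iff.1 (Nat.le_zero.1 hlen))) hx
  | succ n ih =>
    intro x hlen hx
    by_cases hcr : CyclicallyReduced x.toWord
    · refine ⟨x.toWord, fun hnil => hx (toWord_eq_nil_iff.1 hnil), hcr, ?_⟩
      rw [mk_toWord]
    · -- not cyclically reduced: peel first/last letters
      have hred : Reduced x.toWord := reduced_toWord x
      obtain ⟨b, T, hW⟩ : ∃ b T, x.toWord = b :: T := by
        cases hW : x.toWord with
        | nil => exact absurd (toWord_eq_nil_iff.1 hW) hx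
        | cons b T => exact ⟨b, T, rfl⟩
      -- the wrap-around pair must cancel
      have hwrap : ∃ a ∈ x.toWord.getLast?, a = IL b := by
        by_contra hcon
        push_neg at hcon
        apply hcr
        refine List.isChain_append.2 ⟨hred, hred, ?_⟩
        intro p hp q hq
        rw [hW] at hq
        obtain rfl : b = q := by simpa using hq
        rw [NC_iff']
        exact hcon p hp
      obtain ⟨a, ha, rfl⟩ := hwrap
      rw [hW] at ha
      have hTne : T ≠ [] := by
        rintro rfl
        have hb : IL b = b := by simpa [eq_comm] using ha
        obtain ⟨b1, b2⟩ := b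
        simp only [IL, Prod.mk.injEq] at hb
        exact absurd hb.2 (by simp)
      obtain ⟨D, hD⟩ : ∃ D, T = D ++ [IL b] := by
        have h1 := List.dropLast_append_getLast? _ ha
        cases T with
        | nil => exact absurd rfl hTne
        | cons c T' =>
          refine ⟨(c :: T').dropLast, ?_⟩
          rw [List.dropLast_cons₂, List.cons_append] at h1
          injection h1 with _ h2
          exact h2.symm
      have hWrep : x.toWord = b :: D ++ [IL b] := by rw [hW, hD]; rfl
      have hxeq : x = mk [b] * mk D * (mk [b])⁻¹ := by
        conv_lhs => rw [← mk_toWord (x := x), hWrep]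
        rw [mk_singleton_inv, mul_mk, mul_mk]
        simp
      have hDred : Reduced D := by
        refine hred.infix ⟨[b], [IL b], ?_⟩
        rw [hWrep]; rfl
      have hDne : D ≠ [] := by
        rintro rfl
        apply hx
        rw [hxeq]
        have : mk ([] : List (β × Bool)) = 1 := rfl
        rw [this]; group
      have hmkD : (mk D) ≠ 1 := by
        intro hcon
        rw [← toWord_eq_nil_iff, toWord_mk_reduced hDred] at hcon
        exact hDne hcon
      have hlen' : (mk D).toWord.length ≤ n := by
        rw [toWord_mk_reduced hDred]
        have : x.toWord.length = D.length + 2 := by rw [hWrep]; simp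
        omega
      obtain ⟨ρ, hρne, hρ, hconj⟩ := ih (mk D) hlen' hmkD
      refine ⟨ρ, hρne, hρ, ?_⟩
      refine IsConj.trans ?_ hconj
      rw [hxeq]
      exact (isConj_iff.2 ⟨mk [b], rfl⟩).symm


/- ### generic list helpers -/

lemma split_prefix {γ : Type*} (p : γ → Prop) [DecidablePred p] :
    ∀ W : List γ, ∃ S R, W = S ++ R ∧ (∀ l ∈ S, p l) ∧ (∀ l ∈ R.head?, ¬ p l) ∧
      ((∀ l ∈ W.head?, p l) → W ≠ [] → S ≠ [])
  | [] => ⟨[], [], rfl, by simp, by simp, fun _ h => absurd rfl h⟩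
  | (x :: W) => by
    by_cases hx : p x
    · obtain ⟨S, R, hWR, hS, hR, _⟩ := split_prefix p W
      refine ⟨x :: S, R, by rw [hWR]; rfl, ?_, hR, fun _ _ => by simp⟩
      intro l hl
      rcases List.mem_cons.1 hl with rfl | hl
      · exact hx
      · exact hS l hl
    · exact ⟨[], x :: W, rfl, by simp, by simpa using hx, fun hh _ => absurd (hh x rfl) hx⟩

lemma takeWhile_append_eq {γ : Type*} (p : γ → Bool) :
    ∀ (X Y : List γ), (∀ x ∈ X, p x) → (∀ y ∈ Y.head?, ¬ p y) → (X ++ Y).takeWhile p = X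
  | [], Y, _, hY => by
    cases Y with
    | nil => rfl
    | cons y t =>
      have h : ¬ p y := hY y rfl
      simp [List.takeWhile_cons, h]
  | (x :: X), Y, hX, hY => by
    have hx : p x := hX x (by simp)
    simp only [List.cons_append, List.takeWhile_cons, hx, if_true]
    rw [takeWhile_append_eq p X Y (fun a ha => hX a (by simp [ha])) hY]

lemma head?_append_left {γ : Type*} (X Y : List γ) (h : X ≠ []) :
    (X ++ Y).head? = X.head? := by
  cases X with
  | nil => exact absurd rfl h
  | cons x t => rfl

lemma mk_replicate (x : β × Bool) : ∀ k : ℕ, mk (List.replicate k x) = (mk [x]) ^ k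
  | 0 => by rw [pow_zero]; rfl
  | (k+1) => by
    rw [List.replicate_succ, pow_succ']
    have : mk (x :: List.replicate k x) = mk [x] * mk (List.replicate k x) := by
      rw [mul_mk]; rfl
    rw [this, mk_replicate x k]

lemma reduced_all_same (o : β) (b : Bool) :
    ∀ N : List (β × Bool), Reduced ((o, b) :: N) → (∀ l ∈ N, l.1 = o) →
      (o, b) :: N = List.replicate (N.length + 1) (o, b) := by
  intro N
  induction N with
  | nil => simp
  | cons y T ih =>
    intro hred hall
    have hNC : NC (o, b) y := (List.isChain_cons_cons.1 hred).1
    have hy1 : y.1 = o := hall y (by simp)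
    have h2 : y.2 = b := by
      by_contra hb2
      exact hNC ⟨hy1.symm, by cases hbb : b <;> cases hyy : y.2 <;> simp_all⟩
    have hy : y = (o, b) := Prod.ext hy1 h2
    subst hy
    rw [List.length_cons, List.replicate_succ (n := T.length + 1)]
    rw [← ih hred.tail (fun l hl => hall l (List.mem_cons_of_mem _ hl))]

/- ### the Option α application -/

section App

variable {α : Type*} [DecidableEq α]

lemma NC_of_base_ne {a b : (Option α) × Bool} (h : a.1 ≠ b.1) : NC a b :=
  fun hc => h hc.1

lemma mem_A_of_all_some :
    ∀ L : List ((Option α) × Bool), (∀ l ∈ L, (l.1).isSome) →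
      mk L ∈ (FreeGroup.map (some : α → Option α)).range
  | [] => fun _ => by
    rw [← FreeGroup.one_eq_mk]
    exact one_mem _
  | (l :: L) => fun hall => by
    have hcons : mk (l :: L) = mk [l] * mk L := by rw [mul_mk]; rfl
    rw [hcons]
    refine mul_mem ?_ (mem_A_of_all_some L fun a ha => hall a (List.mem_cons_of_mem _ ha))
    obtain ⟨o, b⟩ := l
    obtain ⟨x, rfl⟩ := Option.isSome_iff_exists.1 (hall (o, b) (by simp))
    cases b
    · have h1 : mk [((some x : Option α), false)] = (FreeGroup.of (some x : Option α))⁻¹ :=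
        (mk_singleton_inv ((some x : Option α), true)).symm
      rw [h1]
      exact inv_mem ⟨FreeGroup.of x, FreeGroup.map.of⟩
    · exact ⟨FreeGroup.of x, FreeGroup.map.of⟩

lemma all_some_of_mem_A {a : FreeGroup (Option α)}
    (ha : a ∈ (FreeGroup.map (some : α → Option α)).range) :
    ∀ l ∈ a.toWord, (l.1).isSome := by
  obtain ⟨y, rfl⟩ := ha
  have h1 : (FreeGroup.map (some : α → Option α)) y
      = mk (y.toWord.map fun x => ((some x.1 : Option α), x.2)) := by
    conv_lhs => rw [← mk_toWord (x := y)]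
    exact FreeGroup.map.mk
  have h2 : Reduced (y.toWord.map fun x => ((some x.1 : Option α), x.2)) := by
    unfold Reduced
    change List.IsChain _ _
    rw [List.isChain_map]
    exact (reduced_toWord y).imp fun {p q} hpq => by
      intro ⟨hc1, hc2⟩
      exact hpq ⟨by simpa using hc1, hc2⟩
  rw [h1, toWord_mk_reduced h2]
  intro l hl
  obtain ⟨x, -, rfl⟩ := List.mem_map.1 hl
  rfl

lemma fixes_none_block (M : MulAut (FreeGroup (Option α)))
    (hMt : M (FreeGroup.of none) = FreeGroup.of none)
    {N : List ((Option α) × Bool)} (hred : Reduced N)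
    (hall : ∀ l ∈ N, l.1 = (none : Option α)) : M (mk N) = mk N := by
  cases N with
  | nil =>
    rw [← FreeGroup.one_eq_mk]
    exact _root_.map_one M
  | cons x T =>
    obtain ⟨o, b⟩ := x
    obtain rfl : o = none := hall (o, b) (by simp)
    have hrep := reduced_all_same (none : Option α) b T hred
      (fun l hl => hall l (List.mem_cons_of_mem _ hl))
    rw [hrep, mk_replicate, _root_.map_pow]
    congr 1
    cases b
    · have h2 : mk [((none : Option α), false)] = (FreeGroup.of (none : Option α))⁻¹ :=
        (mk_singleton_inv ((none : Option α), true)).symm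
      rw [h2, _root_.map_inv, hMt]
    · have h1 : mk [((none : Option α), true)] = FreeGroup.of (none : Option α) := rfl
      rw [h1, hMt]

lemma sub_word (M : MulAut (FreeGroup (Option α)))
    (hMt : M (FreeGroup.of none) = FreeGroup.of none)
    (hMA : ∀ a ∈ (FreeGroup.map (some : α → Option α)).range,
      M a ∈ (FreeGroup.map (some : α → Option α)).range) :
    ∀ (n : ℕ) (W : List ((Option α) × Bool)), W.length ≤ n → Reduced W → W ≠ [] →
      (∀ l ∈ W.head?, (l.1).isSome) → (∀ l ∈ W.getLast?, l.1 = none) →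
      ∃ V, (M (mk W)).toWord = V ∧ Reduced V ∧ V ≠ [] ∧
        (∀ l ∈ V.head?, (l.1).isSome) ∧ (∀ l ∈ V.getLast?, l.1 = none) ∧
        V.takeWhile (fun l => (l.1).isSome) =
          (M (mk (W.takeWhile (fun l => (l.1).isSome)))).toWord := by
  intro n
  induction n with
  | zero =>
    intro W hlen _ hWne _ _
    exact absurd (List.length_eq_zero_iff.1 (Nat.le_zero.1 hlen)) hWne
  | succ n ih =>
    intro W hlen hred hWne hhead hlast
    obtain ⟨S, R, hWR, hSall, hRhead, hSne'⟩ :=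
      split_prefix (fun l : (Option α) × Bool => (l.1).isSome) W
    have hSne : S ≠ [] := hSne' hhead hWne
    have hRhead' : ∀ l ∈ R.head?, l.1 = (none : Option α) := fun l hl =>
      Option.not_isSome_iff_eq_none.1 (hRhead l hl)
    have hRne : R ≠ [] := by
      rintro rfl
      have hWS : W = S := by simpa using hWR
      obtain ⟨l, hl⟩ : ∃ l, W.getLast? = some l :=
        ⟨W.getLast hWne, List.getLast?_eq_getLast hWne⟩
      have h1 : l.1 = none := hlast l hl
      have h2 : (l.1).isSome := hSall l (by
        rw [← hWS]
        exact List.mem_of_mem_getLast? hl)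
      rw [h1] at h2
      simp at h2
    obtain ⟨N, W₂, hRN, hNall, hW₂head, hNne'⟩ :=
      split_prefix (fun l : (Option α) × Bool => l.1 = (none : Option α)) R
    have hNne : N ≠ [] := hNne' hRhead' hRne
    have hW₂head' : ∀ l ∈ W₂.head?, (l.1).isSome := fun l hl =>
      Option.ne_none_iff_isSome.1 (hW₂head l hl)
    have hW : W = S ++ (N ++ W₂) := by rw [hWR, hRN]
    -- the blocks are reduced
    have hSred : Reduced S := hred.infix ⟨[], N ++ W₂, by rw [hW]; simp⟩
    have hNred : Reduced N := hred.infix ⟨S, W₂, by rw [hW]; simp⟩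
    have hW₂red : Reduced W₂ := hred.infix ⟨S ++ N, [], by rw [hW]; simp⟩
    -- the A-part
    have haA := mem_A_of_all_some S hSall
    have hMaA := hMA _ haA
    set S' : List ((Option α) × Bool) := (M (mk S)).toWord with hS'
    have hS'all : ∀ l ∈ S', (l.1).isSome := all_some_of_mem_A hMaA
    have hS'red : Reduced S' := reduced_toWord _
    have hS'ne : S' ≠ [] := by
      rw [hS', ne_eq, toWord_eq_nil_iff]
      intro hcon
      have : mk S = 1 := by
        have h9 : M (mk S) = M 1 := by rw [hcon]; simp
        exact M.injective h9
      rw [← toWord_eq_nil_iff, toWord_mk_reduced hSred] at this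
      exact hSne this
    have hMS : M (mk S) = mk S' := by rw [hS', mk_toWord]
    have hMN : M (mk N) = mk N := fixes_none_block M hMt hNred hNall
    -- head of N
    have hNhead : ∀ l ∈ N.head?, l.1 = (none : Option α) := fun l hl =>
      hRhead' l (by rw [hRN, head?_append_left _ _ hNne]; exact hl)
    have hNCjunc1 : ∀ x ∈ S'.getLast?, ∀ y ∈ N.head?, NC x y := by
      intro x hx y hy
      refine NC_of_base_ne ?_
      have h1 : (x.1).isSome := hS'all x (List.mem_of_mem_getLast? hx)
      have h2 : y.1 = none := hNhead y hy
      rw [h2]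
      exact Option.ne_none_iff_isSome.2 h1
    have hmkW : mk W = mk S * (mk N * mk W₂) := by
      rw [hW, ← mul_mk, ← mul_mk]
    by_cases hW₂ : W₂ = []
    · -- W = S ++ N
      subst hW₂
      have hV : M (mk W) = mk (S' ++ N) := by
        rw [hmkW]
        have : mk ([] : List ((Option α) × Bool)) = 1 := rfl
        rw [this, mul_one, _root_.map_mul, hMS, hMN, mul_mk]
      have hVred : Reduced (S' ++ N) := by
        refine List.isChain_append.2 ⟨hS'red, hNred, hNCjunc1⟩
      refine ⟨S' ++ N, by rw [hV, toWord_mk_reduced hVred], hVred, by simp [hS'ne], ?_, ?_, ?_⟩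
      · rw [head?_append_left _ _ hS'ne]
        exact fun l hl => hS'all l (List.mem_of_mem_head? hl)
      · rw [List.getLast?_append_of_ne_nil _ hNne]
        exact fun l hl => hNall l (List.mem_of_mem_getLast? hl)
      · rw [takeWhile_append_eq _ S' N hS'all
          (fun y hy => by rw [hNhead y hy]; simp)]
        rw [hW, List.append_nil, takeWhile_append_eq _ S N hSall
          (fun y hy => by rw [hNhead y hy]; simp)]
    · -- recurse on W₂
      have hNW₂ne : N ++ W₂ ≠ [] := by simp [hNne]
      have hW₂last : ∀ l ∈ W₂.getLast?, l.1 = (none : Option α) := by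
        intro l hl
        refine hlast l ?_
        rw [hW, List.getLast?_append_of_ne_nil _ hNW₂ne,
          List.getLast?_append_of_ne_nil _ hW₂]
        exact hl
      have hlen₂ : W₂.length ≤ n := by
        have h1 : W.length = S.length + (N.length + W₂.length) := by rw [hW]; simp
        have h2 : 0 < S.length := List.length_pos_iff.2 hSne
        have h3 : 0 < N.length := List.length_pos_iff.2 hNne
        omega
      obtain ⟨V₂, hV₂eq, hV₂red, hV₂ne, hV₂head, hV₂last, -⟩ :=
        ih W₂ hlen₂ hW₂red hW₂ hW₂head' hW₂last
      have hMV₂ : M (mk W₂) = mk V₂ := by rw [← hV₂eq, mk_toWord]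
      have hjunc2 : ∀ x ∈ N.getLast?, ∀ y ∈ V₂.head?, NC x y := by
        intro x hx y hy
        refine NC_of_base_ne ?_
        rw [hNall x (List.mem_of_mem_getLast? hx)]
        exact (Option.ne_none_iff_isSome.2 (hV₂head y hy)).symm
      have hVred : Reduced (S' ++ (N ++ V₂)) := by
        refine List.isChain_append.2 ⟨hS'red, List.isChain_append.2 ⟨hNred, hV₂red, hjunc2⟩, ?_⟩
        intro x hx y hy
        rw [head?_append_left _ _ hNne] at hy
        exact hNCjunc1 x hx y hy
      have hV : M (mk W) = mk (S' ++ (N ++ V₂)) := by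
        rw [hmkW, _root_.map_mul, _root_.map_mul, hMS, hMN, hMV₂, ← mul_mk, ← mul_mk]
      refine ⟨S' ++ (N ++ V₂), by rw [hV, toWord_mk_reduced hVred], hVred,
        by simp [hS'ne], ?_, ?_, ?_⟩
      · rw [head?_append_left _ _ hS'ne]
        exact fun l hl => hS'all l (List.mem_of_mem_head? hl)
      · have hNV₂ne : N ++ V₂ ≠ [] := by simp [hNne]
        rw [List.getLast?_append_of_ne_nil _ hNV₂ne,
          List.getLast?_append_of_ne_nil _ hV₂ne]
        exact hV₂last
      · rw [takeWhile_append_eq _ S' (N ++ V₂) hS'all (by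
          intro y hy
          rw [head?_append_left _ _ hNne] at hy
          rw [hNhead y hy]; simp)]
        rw [hW, takeWhile_append_eq _ S (N ++ W₂) hSall (by
          intro y hy
          rw [head?_append_left _ _ hNne] at hy
          rw [hNhead y hy]; simp)]

lemma conj_append_comm (X Y : List ((Option α) × Bool)) :
    IsConj (mk (X ++ Y)) (mk (Y ++ X)) := by
  rw [← mul_mk, ← mul_mk]
  exact isConj_iff.2 ⟨(mk X)⁻¹, by group⟩

lemma cyclicallyReduced_of_ends {V : List ((Option α) × Bool)} (hred : Reduced V)
    (hhead : ∀ l ∈ V.head?, (l.1).isSome) (hlast : ∀ l ∈ V.getLast?, l.1 = none) :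
    CyclicallyReduced V :=
  List.isChain_append.2 ⟨hred, hred, fun x hx y hy =>
    NC_of_base_ne (by
      rw [hlast x hx]
      exact (Option.ne_none_iff_isSome.2 (hhead y hy)).symm)⟩

lemma rot_normalize {ρ : List ((Option α) × Bool)} (hcyc : CyclicallyReduced ρ)
    (hsome : ∃ l ∈ ρ, (l.1).isSome) (hnone : ∃ l ∈ ρ, l.1 = none) :
    ∃ ρ', CyclicallyReduced ρ' ∧ ρ' ≠ [] ∧
      (∀ l ∈ ρ'.head?, (l.1).isSome) ∧ (∀ l ∈ ρ'.getLast?, l.1 = none) ∧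
      IsConj (mk ρ) (mk ρ') := by
  have hρne : ρ ≠ [] := by
    rintro rfl
    obtain ⟨l, hl, -⟩ := hsome
    exact absurd hl List.not_mem_nil
  obtain ⟨le, hle⟩ : ∃ l, ρ.getLast? = some l :=
    ⟨ρ.getLast hρne, List.getLast?_eq_getLast hρne⟩
  by_cases hlen : le.1 = none
  · -- last letter is a t-letter : rotate the none-prefix to the back
    obtain ⟨S, R, hSR, hSall, hRhead, -⟩ :=
      split_prefix (fun l : (Option α) × Bool => l.1 = (none : Option α)) ρ
    have hRne : R ≠ [] := by
      rintro rfl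
      obtain ⟨l, hl, hli⟩ := hsome
      rw [hSR, List.append_nil] at hl
      rw [hSall l hl] at hli
      simp at hli
    refine ⟨R ++ S, ?_, by simp [hRne], ?_, ?_, ?_⟩
    · exact (hSR ▸ hcyc).append_comm
    · rw [head?_append_left _ _ hRne]
      intro l hl
      exact Option.ne_none_iff_isSome.1 (hRhead l hl)
    · intro l hl
      by_cases hS : S = []
      · subst hS
        rw [List.append_nil] at hl
        have hρR : ρ = R := by simpa using hSR
        rw [← hρR, hle] at hl
        obtain rfl : le = l := by simpa using hl
        exact hlen
      · rw [List.getLast?_append_of_ne_nil _ hS] at hl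
        exact hSall l (List.mem_of_mem_getLast? hl)
    · rw [hSR]
      exact conj_append_comm S R
  · -- last letter is an A-letter : rotate the some-suffix to the front
    obtain ⟨S, R, hSR, hSall, hRhead, hSne'⟩ :=
      split_prefix (fun l : (Option α) × Bool => (l.1).isSome) ρ.reverse
    have hEne : ρ.reverse ≠ [] := by simpa using hρne
    have hSne : S ≠ [] := by
      refine hSne' ?_ hEne
      intro l hl
      rw [List.head?_reverse, hle] at hl
      obtain rfl : le = l := by simpa using hl
      exact Option.ne_none_iff_isSome.1 hlen
    have hRne : R ≠ [] := by
      rintro rfl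
      obtain ⟨l, hl, hln⟩ := hnone
      have hl' : l ∈ ρ.reverse := List.mem_reverse.2 hl
      rw [hSR, List.append_nil] at hl'
      have := hSall l hl'
      rw [hln] at this
      simp at this
    have hρrep : ρ = R.reverse ++ S.reverse := by
      have : ρ.reverse.reverse = (S ++ R).reverse := by rw [hSR]
      simpa using this
    refine ⟨S.reverse ++ R.reverse, ?_, by simp [hSne], ?_, ?_, ?_⟩
    · exact (hρrep ▸ hcyc).append_comm
    · rw [head?_append_left _ _ (by simpa using hSne), List.head?_reverse]
      intro l hl
      exact hSall l (List.mem_of_mem_getLast? hl)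
    · rw [List.getLast?_append_of_ne_nil _ (by simpa using hRne), List.getLast?_reverse]
      intro l hl
      exact Option.not_isSome_iff_eq_none.1 (hRhead l hl)
    · rw [hρrep]
      exact conj_append_comm R.reverse S.reverse

/-- The retraction of the free group onto the subgroup `A`. -/
noncomputable def retr (α : Type*) : FreeGroup (Option α) →* FreeGroup (Option α) :=
  (FreeGroup.map (some : α → Option α)).comp
    (FreeGroup.lift (fun o : Option α => o.elim 1 FreeGroup.of))

lemma retr_mem (g : FreeGroup (Option α)) :
    retr α g ∈ (FreeGroup.map (some : α → Option α)).range :=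
  ⟨FreeGroup.lift (fun o : Option α => o.elim 1 FreeGroup.of) g, rfl⟩

lemma retr_fix : ∀ a ∈ (FreeGroup.map (some : α → Option α)).range, retr α a = a := by
  rintro _ ⟨y, rfl⟩
  have h : (retr α).comp (FreeGroup.map (some : α → Option α))
      = FreeGroup.map (some : α → Option α) := by
    refine FreeGroup.ext_hom _ _ fun x => ?_
    simp [retr, FreeGroup.map.of, FreeGroup.lift_apply_of]
  exact DFunLike.congr_fun h y

lemma isConj_map {G H : Type*} [Group G] [Group H] (f : G →* H) {a b : G}
    (h : IsConj a b) : IsConj (f a) (f b) := by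
  obtain ⟨c, hc⟩ := isConj_iff.1 h
  exact isConj_iff.2 ⟨f c, by rw [← _root_.map_inv, ← _root_.map_mul, ← _root_.map_mul, hc]⟩

lemma mulaut_pow_fix {G : Type*} [Group G] (M : MulAut G) {x : G} (h : M x = x) :
    ∀ k : ℕ, (M ^ k) x = x
  | 0 => by simp
  | (k+1) => by
    rw [pow_succ, MulAut.mul_apply, h, mulaut_pow_fix M h k]

lemma mulaut_pow_mem {G : Type*} [Group G] (M : MulAut G) {A : Subgroup G}
    (h : ∀ a ∈ A, M a ∈ A) : ∀ k : ℕ, ∀ a ∈ A, (M ^ k) a ∈ A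
  | 0 => fun a ha => by simpa using ha
  | (k+1) => fun a ha => by
    rw [pow_succ, MulAut.mul_apply]
    exact mulaut_pow_mem M h k _ (h a ha)

lemma isConj_pow_self {G : Type*} [Group G] (M : MulAut G) {x : G} (h : IsConj (M x) x) :
    ∀ k : ℕ, IsConj ((M ^ k) x) x
  | 0 => by
    simp only [pow_zero, MulAut.one_apply]
    exact IsConj.refl x
  | (k+1) => by
    rw [pow_succ, MulAut.mul_apply]
    have h1 : IsConj ((M ^ k) (M x)) ((M ^ k) x) :=
      isConj_map (M ^ k).toMonoidHom h
    exact h1.trans (isConj_pow_self M h k)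

end App
end Stmt11


/-- The restriction of `Φ` to the invariant subgroup `A` is atoroidal: no positive
power of `Φ` maps a nontrivial element of `A` to a conjugate of itself by an
element of `A`. -/
def RestrictionAtoroidal {F : Type*} [Group F] (Φ : MulAut F) (A : Subgroup F) : Prop :=
  ∀ n : ℕ, 1 ≤ n → ∀ a ∈ A, a ≠ 1 → ¬ ∃ b ∈ A, b * (Φ ^ n) a * b⁻¹ = a

/-- Let `F = FreeGroup (Option α)`, `t` the generator `of none`, and `A` the image
of `FreeGroup α` under `FreeGroup.map some`. If `Φ` is an automorphism of `F`
fixing `t`, preserving `A`, and restricting to an atoroidal automorphism of `A`,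
then every nontrivial element with periodic conjugacy class is conjugate to a
nonzero power of `t`. -/
theorem statement_11 {α : Type*}
    (Φ : MulAut (FreeGroup (Option α)))
    (ht : Φ (FreeGroup.of (none : Option α)) = FreeGroup.of (none : Option α))
    (hA : ((FreeGroup.map (some : α → Option α)).range).map Φ.toMonoidHom
        = (FreeGroup.map (some : α → Option α)).range)
    (hres : RestrictionAtoroidal Φ (FreeGroup.map (some : α → Option α)).range) :
    ∀ h : FreeGroup (Option α), h ≠ 1 →
      (∃ n : ℕ, 1 ≤ n ∧ IsConj ((Φ ^ n) h) h) →
      ∃ m : ℤ, m ≠ 0 ∧ IsConj h (FreeGroup.of (none : Option α) ^ m) := by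
  classical
  intro h hne hper
  obtain ⟨n, hn1, hconj⟩ := hper
  have hAstep : ∀ a ∈ (FreeGroup.map (some : α → Option α)).range,
      Φ a ∈ (FreeGroup.map (some : α → Option α)).range := by
    intro a ha
    rw [← hA]
    exact Subgroup.mem_map.2 ⟨a, ha, rfl⟩
  obtain ⟨ρ, hρne, hρcyc, hhρ⟩ := Stmt11.exists_cyclicReduction h.toWord.length h le_rfl hne
  by_cases hsome : ∃ l ∈ ρ, (l.1).isSome
  · exfalso
    have hconjρ : IsConj ((Φ ^ n) (FreeGroup.mk ρ)) (FreeGroup.mk ρ) := by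
      have h1 : IsConj ((Φ ^ n) h) ((Φ ^ n) (FreeGroup.mk ρ)) :=
        Stmt11.isConj_map (Φ ^ n).toMonoidHom hhρ
      exact (h1.symm.trans hconj).trans hhρ
    have hmkne : FreeGroup.mk ρ ≠ 1 := Stmt11.mk_ne_one hρcyc.reduced hρne
    by_cases hnone : ∃ l ∈ ρ, l.1 = none
    · -- mixed case
      obtain ⟨ρ', hcyc', hne', hhead', hlast', hconj'⟩ :=
        Stmt11.rot_normalize hρcyc hsome hnone
      have hred' : Stmt11.Reduced ρ' := hcyc'.reduced
      set x := FreeGroup.mk ρ' with hx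
      set ψ : MulAut (FreeGroup (Option α)) := Φ ^ n with hψ
      have hconjx : IsConj (ψ x) x := by
        have h1 : IsConj (ψ (FreeGroup.mk ρ)) (ψ x) :=
          Stmt11.isConj_map ψ.toMonoidHom hconj'
        exact (h1.symm.trans hconjρ).trans hconj'
      have hψt : ∀ k : ℕ, (ψ ^ k) (FreeGroup.of (none : Option α)) = FreeGroup.of none :=
        fun k => Stmt11.mulaut_pow_fix _ (Stmt11.mulaut_pow_fix Φ ht n) k
      have hψA : ∀ k : ℕ, ∀ a ∈ (FreeGroup.map (some : α → Option α)).range,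
          (ψ ^ k) a ∈ (FreeGroup.map (some : α → Option α)).range :=
        fun k => Stmt11.mulaut_pow_mem _
          (fun a ha => Stmt11.mulaut_pow_mem Φ hAstep n a ha) k
      have hWprops : ∀ k : ℕ, ∃ V, ((ψ ^ k) x).toWord = V ∧ Stmt11.Reduced V ∧ V ≠ [] ∧
          (∀ l ∈ V.head?, (l.1).isSome) ∧ (∀ l ∈ V.getLast?, l.1 = none) ∧
          V.takeWhile (fun l => (l.1).isSome) =
            ((ψ ^ k) (FreeGroup.mk (ρ'.takeWhile fun l => (l.1).isSome))).toWord := by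
        intro k
        exact Stmt11.sub_word (ψ ^ k) (hψt k) (hψA k) ρ'.length ρ' le_rfl
          hred' hne' hhead' hlast'
      have hrot : ∀ k : ℕ, ((ψ ^ k) x).toWord ∈
          ((Finset.range (ρ'.length + 1)).image (fun i => ρ'.rotate i)) := by
        intro k
        obtain ⟨V, hVeq, hVred, hVne, hVhead, hVlast, -⟩ := hWprops k
        have hVcyc := Stmt11.cyclicallyReduced_of_ends hVred hVhead hVlast
        have hconjk : IsConj x (FreeGroup.mk V) := by
          rw [← hVeq, FreeGroup.mk_toWord]
          exact (Stmt11.isConj_pow_self ψ hconjx k).symm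
        have hVrot : V ~r ρ' := Stmt11.rotation_of_isConj hcyc' hne' hVcyc hconjk
        obtain ⟨i, hi, hieq⟩ := List.isRotated_iff_mod.1 hVrot.symm
        rw [hVeq]
        exact Finset.mem_image.2 ⟨i, Finset.mem_range.2 (Nat.lt_succ_of_le hi), hieq⟩
      have key : ∀ k k' : ℕ, k < k' → ((ψ ^ k) x).toWord = ((ψ ^ k') x).toWord →
          ∃ d : ℕ, 1 ≤ d ∧ (ψ ^ d) x = x := by
        intro k k' hlt heq
        refine ⟨k' - k, by omega, ?_⟩
        have h1 : (ψ ^ k) x = (ψ ^ k') x := FreeGroup.toWord_injective heq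
        have hk : k' = k + (k' - k) := by omega
        have h2 : (ψ ^ k') x = (ψ ^ k) ((ψ ^ (k' - k)) x) := by
          rw [← MulAut.mul_apply, ← pow_add, ← hk]
        rw [h2] at h1
        exact ((ψ ^ k).injective h1).symm
      obtain ⟨k, k', hkk', heq⟩ := Finite.exists_ne_map_eq_of_infinite
        (fun k : ℕ => (⟨((ψ ^ k) x).toWord, hrot k⟩ :
          {v // v ∈ (Finset.range (ρ'.length + 1)).image (fun i => ρ'.rotate i)}))
      have heq' : ((ψ ^ k) x).toWord = ((ψ ^ k') x).toWord := congrArg Subtype.val heq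
      obtain ⟨d, hd1, hdx⟩ : ∃ d : ℕ, 1 ≤ d ∧ (ψ ^ d) x = x := by
        rcases lt_or_gt_of_ne hkk' with hlt | hlt
        · exact key k k' hlt heq'
        · exact key k' k hlt heq'.symm
      obtain ⟨V, hVeq, -, -, -, -, hVtake⟩ := hWprops d
      have hVρ' : V = ρ' := by
        rw [← hVeq, hdx, hx, Stmt11.toWord_mk_reduced hred']
      subst hVρ'
      set S := V.takeWhile (fun l => (l.1).isSome) with hS
      have hfix : (ψ ^ d) (FreeGroup.mk S) = FreeGroup.mk S := by
        conv_rhs => rw [hVtake]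
        rw [FreeGroup.mk_toWord]
      have hSne : S ≠ [] := by
        cases hc : V with
        | nil => exact absurd hc hne'
        | cons c tl =>
          have hcs : (c.1).isSome = true := hhead' c (by rw [hc]; rfl)
          rw [hS, hc, List.takeWhile_cons, if_pos hcs]
          simp
      have hSpre : S <+: V :=
        ⟨V.dropWhile (fun l => (l.1).isSome), List.takeWhile_append_dropWhile⟩
      have hSred : Stmt11.Reduced S := hred'.infix hSpre.isInfix
      have hSA : FreeGroup.mk S ∈ (FreeGroup.map (some : α → Option α)).range :=
        Stmt11.mem_A_of_all_some S (fun l hl => by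
          rw [hS] at hl
          exact List.mem_takeWhile_imp (l := V) hl)
      have hS1 : FreeGroup.mk S ≠ 1 := Stmt11.mk_ne_one hSred hSne
      refine hres (n * d) (Nat.one_le_iff_ne_zero.2 (by positivity)) _ hSA hS1 ⟨1, one_mem _, ?_⟩
      have hpow : (Φ ^ (n * d)) (FreeGroup.mk S) = FreeGroup.mk S := by
        rw [pow_mul, ← hψ]
        exact hfix
      rw [hpow]
      group
    · -- all-some case
      push_neg at hnone
      have hallsome : ∀ l ∈ ρ, (l.1).isSome := fun l hl =>
        Option.ne_none_iff_isSome.1 (hnone l hl)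
      have hA' : FreeGroup.mk ρ ∈ (FreeGroup.map (some : α → Option α)).range :=
        Stmt11.mem_A_of_all_some ρ hallsome
      have hψA' : (Φ ^ n) (FreeGroup.mk ρ) ∈ (FreeGroup.map (some : α → Option α)).range :=
        Stmt11.mulaut_pow_mem Φ hAstep n _ hA'
      obtain ⟨u, hu⟩ := isConj_iff.1 hconjρ
      refine hres n hn1 _ hA' hmkne ⟨Stmt11.retr α u, Stmt11.retr_mem u, ?_⟩
      have hrr := congrArg (Stmt11.retr α) hu
      rw [_root_.map_mul, _root_.map_mul, _root_.map_inv] at hrr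
      rw [Stmt11.retr_fix _ hψA', Stmt11.retr_fix _ hA'] at hrr
      exact hrr
  · -- all-none : success
    push_neg at hsome
    have hallnone : ∀ l ∈ ρ, l.1 = (none : Option α) := fun l hl =>
      Option.not_isSome_iff_eq_none.1 (by simpa using hsome l hl)
    cases hc : ρ with
    | nil => exact absurd hc hρne
    | cons c T =>
      obtain ⟨o, b⟩ := c
      obtain rfl : o = none := hallnone (o, b) (by rw [hc]; simp)
      have hrep := Stmt11.reduced_all_same (none : Option α) b T (hc ▸ hρcyc.reduced)
        (fun l hl => hallnone l (by rw [hc]; exact List.mem_cons_of_mem _ hl))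
      have hmk : FreeGroup.mk ρ
          = (FreeGroup.mk [((none : Option α), b)]) ^ (T.length + 1) := by
        rw [hc, hrep, Stmt11.mk_replicate]
      cases b
      · refine ⟨-((T.length + 1 : ℕ) : ℤ), by omega, ?_⟩
        have h2 : FreeGroup.mk [((none : Option α), false)]
            = (FreeGroup.of (none : Option α))⁻¹ :=
          (Stmt11.mk_singleton_inv ((none : Option α), true)).symm
        have h3 : FreeGroup.mk ρ
            = FreeGroup.of (none : Option α) ^ (-((T.length + 1 : ℕ) : ℤ)) := by
          rw [hmk, h2, inv_pow, ← zpow_natCast, ← zpow_neg]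
        exact h3 ▸ hhρ
      · refine ⟨((T.length + 1 : ℕ) : ℤ), by omega, ?_⟩
        have h1 : FreeGroup.mk [((none : Option α), true)]
            = FreeGroup.of (none : Option α) := rfl
        have h3 : FreeGroup.mk ρ
            = FreeGroup.of (none : Option α) ^ ((T.length + 1 : ℕ) : ℤ) := by
          rw [hmk, h1, zpow_natCast]
        exact h3 ▸ hhρ
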